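/- The positive semidefinite matrices C⁺ and C⁻ appearing in the decomposition Ĉ = (4/3)C⁺ − (1/3)C⁻ have orthogonal supports, i.e., C⁺ · C⁻ = 0. -/
import Mathlib
set_option maxHeartbeats 4000000

open Matrix Complex

noncomputable section

@[simp] lemma vec8_five {α} (a b c d e f g h : α) : ![a,b,c,d,e,f,g,h] 5 = f := rfl
@[simp] lemma vec8_six {α} (a b c d e f g h : α) : ![a,b,c,d,e,f,g,h] 6 = g := rfl
@[simp] lemma vec8_seven {α} (a b c d e f g h : α) : ![a,b,c,d,e,f,g,h] 7 = h := rfl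

noncomputable def Cp8 : Matrix (Fin 8) (Fin 8) ℂ :=
  !![1/3, 0, 0, 1/3, 0, 1/3, 0, 0;
     0, 0, 0, 0, 0, 0, 0, 0;
     0, 0, 1/3, 0, 1/3, 0, 0, 1/3;
     1/3, 0, 0, 1/3, 0, 1/3, 0, 0;
     0, 0, 1/3, 0, 1/3, 0, 0, 1/3;
     1/3, 0, 0, 1/3, 0, 1/3, 0, 0;
     0, 0, 0, 0, 0, 0, 0, 0;
     0, 0, 1/3, 0, 1/3, 0, 0, 1/3]

noncomputable def Cm8 : Matrix (Fin 8) (Fin 8) ℂ :=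
  !![1/3, 0, 0, -1/6, 0, -1/6, 0, 0;
     0, 0, 0, 0, 0, 0, 0, 0;
     0, 0, 1/3, 0, -1/6, 0, 0, -1/6;
     -1/6, 0, 0, 1/3, 0, -1/6, 0, 0;
     0, 0, -1/6, 0, 1/3, 0, 0, -1/6;
     -1/6, 0, 0, -1/6, 0, 1/3, 0, 0;
     0, 0, 0, 0, 0, 0, 0, 0;
     0, 0, -1/6, 0, -1/6, 0, 0, 1/3]

/-- `C⁺` and `C⁻` have orthogonal supports: `C⁺ · C⁻ = 0`. -/
theorem Cp_Cm_orthogonal_supports : Cp8 * Cm8 = 0 := by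
  ext i j
  fin_cases i <;> fin_cases j <;>
    simp [Cp8, Cm8, Matrix.mul_apply, Fin.sum_univ_succ] <;> ring_nf

end
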